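/- Suppose G is a 2-regular acyclic Borel bipartite graph on a Polish space X with Borel bipartition {B₀, B₁}, let n ≥ 1, and let Gₙ be the Borel graph on X with x Gₙ y if and only if there is a G-path of odd length at most 2n − 1 from x to y. If Y is a Gₙ-invariant Borel set such that Gₙ ↾ Y has a Borel perfect matching, then G ↾ Y has a Borel perfect matching. -/

import Mathlib

/-- `M` is a perfect matching of the induced graph `G ↾ A`, viewed as a symmetric set of
edges (ordered pairs) such that every vertex of `A` is incident to exactly one edge of `M`. -/
def IsPerfectMatchingOn {X : Type*} (G : SimpleGraph X) (A : Set X) (M : Set (X × X)) : Prop :=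
  (∀ p ∈ M, p.1 ∈ A ∧ p.2 ∈ A ∧ G.Adj p.1 p.2) ∧
  (∀ x y : X, (x, y) ∈ M ↔ (y, x) ∈ M) ∧
  (∀ x ∈ A, ∃! y : X, (x, y) ∈ M)

open Function

namespace TwoReg

variable {X : Type*} {G : SimpleGraph X}

/-- The type of directed edges of `G`. -/
abbrev Edg (G : SimpleGraph X) := {p : X × X // G.Adj p.1 p.2}

lemma other_exists (hreg : ∀ x : X, (G.neighborSet x).ncard = 2)
    {w x : X} (hx : G.Adj w x) : ∃ z, G.Adj w z ∧ z ≠ x := by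
  obtain ⟨a, b, hab, hset⟩ := Set.ncard_eq_two.mp (hreg w)
  have hx' : x ∈ ({a, b} : Set X) := hset ▸ hx
  have ha : G.Adj w a := by rw [← G.mem_neighborSet, hset]; exact Set.mem_insert _ _
  have hb : G.Adj w b := by rw [← G.mem_neighborSet, hset]; exact Set.mem_insert_of_mem _ rfl
  simp only [Set.mem_insert_iff, Set.mem_singleton_iff] at hx'
  rcases hx' with h | h
  · exact ⟨b, hb, by rw [← h] at hab; exact fun e => hab e.symm⟩
  · exact ⟨a, ha, by rw [← h] at hab; exact hab⟩

lemma other_unique (hreg : ∀ x : X, (G.neighborSet x).ncard = 2)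
    {w x z z' : X} (hx : G.Adj w x) (hz : G.Adj w z) (hz' : G.Adj w z')
    (h1 : z ≠ x) (h2 : z' ≠ x) : z = z' := by
  obtain ⟨a, b, hab, hset⟩ := Set.ncard_eq_two.mp (hreg w)
  have hx' : x ∈ ({a, b} : Set X) := hset ▸ hx
  have hzm : z ∈ ({a, b} : Set X) := hset ▸ hz
  have hzm' : z' ∈ ({a, b} : Set X) := hset ▸ hz'
  simp only [Set.mem_insert_iff, Set.mem_singleton_iff] at hx' hzm hzm'
  rcases hx' with rfl | rfl
  · rcases hzm with rfl | rfl
    · exact absurd rfl h1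
    · rcases hzm' with rfl | rfl
      · exact absurd rfl h2
      · rfl
  · rcases hzm with rfl | rfl
    · rcases hzm' with rfl | rfl
      · rfl
      · exact absurd rfl h2
    · exact absurd rfl h1

variable (hreg : ∀ x : X, (G.neighborSet x).ncard = 2)

/-- The next directed edge: continue from the head of `e` to the neighbor other than its tail. -/
noncomputable def nxt (e : Edg G) : Edg G :=
  ⟨(e.val.2, Classical.choose (other_exists hreg e.prop.symm)),
    (Classical.choose_spec (other_exists hreg e.prop.symm)).1⟩

lemma nxt_fst (e : Edg G) : (nxt hreg e).val.1 = e.val.2 := rfl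

lemma nxt_ne (e : Edg G) : (nxt hreg e).val.2 ≠ e.val.1 :=
  (Classical.choose_spec (other_exists hreg e.prop.symm)).2

lemma nxt_eq {e f : Edg G} (h1 : f.val.1 = e.val.2) (h2 : f.val.2 ≠ e.val.1) :
    f = nxt hreg e := by
  apply Subtype.ext
  apply Prod.ext h1
  have := f.prop
  rw [h1] at this
  exact other_unique hreg e.prop.symm this (nxt hreg e).prop h2 (nxt_ne hreg e)

/-- Reversal of a directed edge. -/
def symE (e : Edg G) : Edg G := ⟨(e.val.2, e.val.1), e.prop.symm⟩

@[simp] lemma symE_symE (e : Edg G) : symE (symE e) = e := rfl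

lemma nxt_symE_nxt (e : Edg G) : nxt hreg (symE (nxt hreg e)) = symE e := by
  refine (nxt_eq hreg ?_ ?_).symm
  · rfl
  · exact fun h => (nxt_ne hreg e) h.symm

lemma iterate_symE (e : Edg G) : ∀ {m k : ℕ}, m ≤ k →
    (nxt hreg)^[m] (symE ((nxt hreg)^[k] e)) = symE ((nxt hreg)^[k - m] e) := by
  intro m
  induction m with
  | zero => intro k _; simp
  | succ m ih =>
      intro k hk
      have hm : m ≤ k := Nat.le_of_succ_le hk
      rw [Function.iterate_succ_apply', ih hm]
      have h1 : 1 ≤ k - m := by omega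
      obtain ⟨j, hj⟩ : ∃ j, k - m = j + 1 := ⟨k - m - 1, by omega⟩
      rw [hj]
      have : k - (m + 1) = j := by omega
      rw [this, Function.iterate_succ_apply', nxt_symE_nxt]

/-- The point at distance `k` from the tail of `e` along the non-backtracking walk. -/
noncomputable def pt (e : Edg G) (k : ℕ) : X := ((nxt hreg)^[k] e).val.1

lemma pt_zero (e : Edg G) : pt hreg e 0 = e.val.1 := rfl

lemma pt_succ (e : Edg G) (k : ℕ) : pt hreg e (k + 1) = ((nxt hreg)^[k] e).val.2 := by
  unfold pt
  rw [Function.iterate_succ_apply']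
  rfl

lemma pt_one (e : Edg G) : pt hreg e 1 = e.val.2 := pt_succ hreg e 0

lemma pt_adj (e : Edg G) (k : ℕ) : G.Adj (pt hreg e k) (pt hreg e (k + 1)) := by
  rw [pt_succ]
  exact ((nxt hreg)^[k] e).prop

lemma pt_iterate (e : Edg G) (k m : ℕ) :
    pt hreg ((nxt hreg)^[k] e) m = pt hreg e (k + m) := by
  unfold pt
  rw [← Function.iterate_add_apply, Nat.add_comm m k]

lemma pt_backtrack (e : Edg G) (k : ℕ) : pt hreg e (k + 2) ≠ pt hreg e k := by
  rw [pt_succ]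
  have : (nxt hreg)^[k+1] e = nxt hreg ((nxt hreg)^[k] e) := Function.iterate_succ_apply' _ _ _
  rw [this]
  exact nxt_ne hreg _

/-- The canonical non-backtracking walk of length `k` starting with directed edge `e`. -/
noncomputable def ptWalk (e : Edg G) : (k : ℕ) → G.Walk (pt hreg e 0) (pt hreg e k)
  | 0 => SimpleGraph.Walk.nil
  | (k + 1) => (ptWalk e k).concat (pt_adj hreg e k)

@[simp] lemma ptWalk_length (e : Edg G) (k : ℕ) : (ptWalk hreg e k).length = k := by
  induction k with
  | zero => rfl
  | succ k ih => rw [ptWalk, SimpleGraph.Walk.length_concat, ih]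

lemma ptWalk_support (e : Edg G) (k : ℕ) :
    (ptWalk hreg e k).support = (List.range (k + 1)).map (pt hreg e) := by
  induction k with
  | zero => rfl
  | succ k ih =>
      rw [ptWalk, SimpleGraph.Walk.support_concat, ih, List.range_succ]
      rw [List.range_succ (n := k + 1), List.map_append, List.range_succ (n := k)]
      simp [List.concat_eq_append]

end TwoReg

namespace TwoReg
variable {X : Type*} {G : SimpleGraph X}
variable (hreg : ∀ x : X, (G.neighborSet x).ncard = 2)

lemma path_length_unique (hac : G.IsAcyclic) {x y : X} {p q : G.Walk x y}
    (hp : p.IsPath) (hq : q.IsPath) : p.length = q.length := by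
  have := SimpleGraph.isAcyclic_iff_path_unique.mp hac ⟨p, hp⟩ ⟨q, hq⟩
  rw [show p = q from congrArg Subtype.val this]

lemma ptWalk_isPath (hac : G.IsAcyclic) : ∀ (k : ℕ) (e : Edg G), (ptWalk hreg e k).IsPath := by
  intro k
  induction k using Nat.strong_induction_on with
  | _ k IH =>
    intro e
    match k with
    | 0 => exact SimpleGraph.Walk.IsPath.nil
    | (k + 1) =>
      have ihk := IH k (Nat.lt_succ_self k) e
      rw [SimpleGraph.Walk.isPath_def, ptWalk, SimpleGraph.Walk.support_concat,
        List.nodup_append']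
      refine ⟨(SimpleGraph.Walk.isPath_def _).mp ihk, List.nodup_singleton _, ?_⟩
      intro a ha hb
      simp only [List.mem_singleton] at hb
      subst hb
      rw [ptWalk_support] at ha
      obtain ⟨i, hi, hieq⟩ := List.mem_map.mp ha
      rw [List.mem_range] at hi
      -- pt e (k+1) = pt e i with i ≤ k
      have hik : i ≤ k := Nat.lt_succ_iff.mp hi
      have hne_k : i ≠ k := by
        intro h; subst h
        exact (pt_adj hreg e i).ne (hieq.symm ▸ rfl)
      have hne_k1 : ¬ (i + 2 = k + 1) := by
        intro h
        have : k + 1 = i + 2 := h.symm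
        exact pt_backtrack hreg e i (by rw [← this, hieq])
      have hik2 : i + 2 ≤ k := by omega
      -- two distinct paths from pt e i to pt e k
      have hadj : G.Adj (pt hreg e i) (pt hreg e k) := by
        have := pt_adj hreg e k
        rw [← hieq] at this
        exact this.symm
      set f := (nxt hreg)^[i] e with hf
      have h0 : pt hreg f 0 = pt hreg e i := by rw [pt_iterate]; simp
      have h1 : pt hreg f (k - i) = pt hreg e k := by rw [pt_iterate]; congr 1; omega
      let P₁ : G.Walk (pt hreg e i) (pt hreg e k) := ((ptWalk hreg f (k - i)).copy h0 h1)
      have hP₁ : P₁.IsPath := by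
        rw [SimpleGraph.Walk.isPath_copy]
        exact IH (k - i) (by omega) f
      have hP₁len : P₁.length = k - i := by
        rw [SimpleGraph.Walk.length_copy, ptWalk_length]
      let P₂ : G.Walk (pt hreg e i) (pt hreg e k) := SimpleGraph.Walk.cons hadj SimpleGraph.Walk.nil
      have hP₂ : P₂.IsPath := by
        rw [SimpleGraph.Walk.cons_isPath_iff]
        exact ⟨SimpleGraph.Walk.IsPath.nil, by simp [hadj.ne]⟩
      have := path_length_unique hac hP₁ hP₂
      rw [hP₁len] at this
      simp only [P₂, SimpleGraph.Walk.length_cons, SimpleGraph.Walk.length_nil] at this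
      omega

lemma pt_injective (hac : G.IsAcyclic) (e : Edg G) : Function.Injective (pt hreg e) := by
  intro a b hab
  by_contra hne
  set K := max a b with hK
  have h := ptWalk_isPath hreg hac K e
  rw [SimpleGraph.Walk.isPath_def, ptWalk_support] at h
  exact hne (List.inj_on_of_nodup_map h
    (List.mem_range.mpr (by omega)) (List.mem_range.mpr (by omega)) hab)

/-- Completeness: any path is the canonical non-backtracking walk of its first edge. -/
lemma endpoint_eq : ∀ {x y : X} (p : G.Walk x y), p.IsPath → p.length ≠ 0 →
    ∀ (e : Edg G), e.val.1 = x → e.val.2 = p.getVert 1 → y = pt hreg e p.length := by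
  intro x y p
  induction p with
  | nil => intro _ h; exact absurd rfl h
  | @cons u v w h q ih =>
    intro hp _ e he1 he2
    have hq : q.IsPath := hp.of_cons
    have hgv1 : (SimpleGraph.Walk.cons h q).getVert 1 = v := by
      rw [SimpleGraph.Walk.getVert_cons_succ, SimpleGraph.Walk.getVert_zero]
    rw [hgv1] at he2
    by_cases hqlen : q.length = 0
    · -- q is nil-like: w = v
      have : w = v := by
        cases q with
        | nil => rfl
        | cons h' q' => simp [SimpleGraph.Walk.length_cons] at hqlen
      subst this
      rw [SimpleGraph.Walk.length_cons, hqlen, pt_one, he2]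
    · -- q has an edge: its first edge is nxt e
      have hqadj : G.Adj v (q.getVert 1) := by
        have := q.adj_getVert_succ (i := 0) (by omega)
        rwa [SimpleGraph.Walk.getVert_zero] at this
      have hgvne : q.getVert 1 ≠ u := by
        intro hcon
        have hx : u ∈ q.support := by
          rw [← hcon, SimpleGraph.Walk.mem_support_iff_exists_getVert]
          exact ⟨1, rfl, by omega⟩
        rw [SimpleGraph.Walk.cons_isPath_iff] at hp
        exact hp.2 hx
      have hfeq : (⟨(v, q.getVert 1), hqadj⟩ : Edg G) = nxt hreg e := by
        apply nxt_eq hreg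
        · rw [he2]
        · rw [he1]; exact hgvne
      have hw := ih hq hqlen ⟨(v, q.getVert 1), hqadj⟩ rfl rfl
      rw [hfeq] at hw
      have hpt : pt hreg (nxt hreg e) q.length = pt hreg e (1 + q.length) := by
        rw [← Function.iterate_one (nxt hreg), pt_iterate]
      rw [show (SimpleGraph.Walk.cons h q).length = 1 + q.length from by
        rw [SimpleGraph.Walk.length_cons]; omega, ← hpt]
      exact hw

/-- Characterization of `Gn` adjacency in terms of the canonical walks. -/
lemma gn_char {n : ℕ} {Gn : SimpleGraph X}
    (hGn : ∀ x y : X, Gn.Adj x y ↔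
      ∃ p : G.Walk x y, p.IsPath ∧ Odd p.length ∧ p.length ≤ 2 * n - 1)
    (hac : G.IsAcyclic) (x y : X) :
    Gn.Adj x y ↔ ∃ (e : Edg G) (L : ℕ), e.val.1 = x ∧ Odd L ∧ L ≤ 2 * n - 1 ∧ pt hreg e L = y := by
  constructor
  · intro h
    obtain ⟨p, hp, hodd, hle⟩ := (hGn x y).mp h
    have hlen : p.length ≠ 0 := by
      intro h0; rw [h0] at hodd; simp at hodd
    have hadj : G.Adj x (p.getVert 1) := by
      have := p.adj_getVert_succ (i := 0) (by omega)
      rwa [SimpleGraph.Walk.getVert_zero] at this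
    refine ⟨⟨(x, p.getVert 1), hadj⟩, p.length, rfl, hodd, hle, ?_⟩
    exact (endpoint_eq hreg p hp hlen _ rfl rfl).symm
  · rintro ⟨e, L, he1, hodd, hle, hpt⟩
    refine (hGn x y).mpr ⟨((ptWalk hreg e L).copy (by rw [pt_zero, he1]) hpt), ?_, ?_, ?_⟩
    · rw [SimpleGraph.Walk.isPath_copy]; exact ptWalk_isPath hreg hac L e
    · rw [SimpleGraph.Walk.length_copy, ptWalk_length]; exact hodd
    · rw [SimpleGraph.Walk.length_copy, ptWalk_length]; exact hle

end TwoReg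

namespace TwoReg
variable {X : Type*} {G : SimpleGraph X}
variable (hreg : ∀ x : X, (G.neighborSet x).ncard = 2)

open Classical in
/-- The number of `M`-pairs whose connecting path crosses the directed edge `e`. -/
noncomputable def cEdge (M : Set (X × X)) (n : ℕ) (e : Edg G) : ℕ :=
  (((Finset.range (2*n)) ×ˢ (Finset.range (2*n))).filter
    (fun ij => (pt hreg (symE e) (ij.1+1), pt hreg e (ij.2+1)) ∈ M)).card

lemma pt_nxt (e : Edg G) (m : ℕ) : pt hreg (nxt hreg e) m = pt hreg e (1 + m) := by
  rw [← Function.iterate_one (nxt hreg), pt_iterate]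

lemma iterate_symE_self (e : Edg G) (k : ℕ) :
    (nxt hreg)^[k] (symE ((nxt hreg)^[k] e)) = symE e := by
  rw [iterate_symE hreg e le_rfl, Nat.sub_self]
  simp

/-- All points on the path between an `M`-matched pair belong to `Y`. -/
lemma seg_mem_Y (hac : G.IsAcyclic) {n : ℕ} {Gn : SimpleGraph X}
    (hGn : ∀ x y : X, Gn.Adj x y ↔
      ∃ p : G.Walk x y, p.IsPath ∧ Odd p.length ∧ p.length ≤ 2 * n - 1)
    {M : Set (X × X)} {Y : Set X}
    (hM1 : ∀ p ∈ M, p.1 ∈ Y ∧ p.2 ∈ Y ∧ Gn.Adj p.1 p.2)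
    (hYinv : ∀ x y : X, Gn.Adj x y → (x ∈ Y ↔ y ∈ Y))
    (g : Edg G) (L : ℕ) (hmem : (pt hreg g 0, pt hreg g L) ∈ M) :
    (Odd L ∧ L ≤ 2 * n - 1) ∧ ∀ m ≤ L, pt hreg g m ∈ Y := by
  obtain ⟨haY, hbY, hadj⟩ := hM1 _ hmem
  obtain ⟨p, hp, hpodd, hple⟩ := (hGn _ _).mp hadj
  have hLlen : L = p.length := by
    have h1 : (ptWalk hreg g L).IsPath := ptWalk_isPath hreg hac L g
    have := path_length_unique hac h1 hp
    rwa [ptWalk_length] at this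
  have hLodd : Odd L := hLlen ▸ hpodd
  have hLle : L ≤ 2 * n - 1 := hLlen ▸ hple
  refine ⟨⟨hLodd, hLle⟩, ?_⟩
  intro m hm
  rcases Nat.eq_zero_or_pos m with rfl | hmpos
  · exact haY
  rcases Nat.even_or_odd m with hme | hmo
  · -- m even positive: use path from pt g m to pt g L
    have hLm : Odd (L - m) := by
      rcases hLodd with ⟨a, ha⟩; rcases hme with ⟨b, hb⟩
      exact ⟨a - b, by omega⟩
    have hadj2 : Gn.Adj (pt hreg g m) (pt hreg g L) := by
      refine (hGn _ _).mpr ⟨((ptWalk hreg ((nxt hreg)^[m] g) (L - m)).copy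
        (by rw [pt_iterate]; congr 1) (by rw [pt_iterate]; congr 1; omega)), ?_, ?_, ?_⟩
      · rw [SimpleGraph.Walk.isPath_copy]; exact ptWalk_isPath hreg hac _ _
      · rw [SimpleGraph.Walk.length_copy, ptWalk_length]; exact hLm
      · rw [SimpleGraph.Walk.length_copy, ptWalk_length]; omega
    exact (hYinv _ _ hadj2).mpr hbY
  · -- m odd: use path from pt g 0 to pt g m
    have hadj2 : Gn.Adj (pt hreg g 0) (pt hreg g m) := by
      refine (hGn _ _).mpr ⟨ptWalk hreg g m, ptWalk_isPath hreg hac m g, ?_, ?_⟩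
      · rw [ptWalk_length]; exact hmo
      · rw [ptWalk_length]; omega
    exact (hYinv _ _ hadj2).mp haY

lemma cEdge_pos_mem_Y (hac : G.IsAcyclic) {n : ℕ} {Gn : SimpleGraph X}
    (hGn : ∀ x y : X, Gn.Adj x y ↔
      ∃ p : G.Walk x y, p.IsPath ∧ Odd p.length ∧ p.length ≤ 2 * n - 1)
    {M : Set (X × X)} {Y : Set X}
    (hM1 : ∀ p ∈ M, p.1 ∈ Y ∧ p.2 ∈ Y ∧ Gn.Adj p.1 p.2)
    (hYinv : ∀ x y : X, Gn.Adj x y → (x ∈ Y ↔ y ∈ Y))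
    (e : Edg G) (hc : cEdge hreg M n e ≠ 0) : e.val.1 ∈ Y ∧ e.val.2 ∈ Y := by
  classical
  rw [cEdge, Finset.card_ne_zero] at hc
  obtain ⟨⟨i, j⟩, hij⟩ := hc.exists_mem
  rw [Finset.mem_filter] at hij
  have hmem : (pt hreg (symE e) (i + 1), pt hreg e (j + 1)) ∈ M := hij.2
  set g : Edg G := symE ((nxt hreg)^[i] (symE e)) with hg
  have hg0 : pt hreg g 0 = pt hreg (symE e) (i + 1) := by
    rw [pt_zero, hg, pt_succ]; rfl
  have hgit : (nxt hreg)^[i] g = e := by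
    rw [hg, iterate_symE_self]; simp
  have hgi : ∀ m, pt hreg g (i + m) = pt hreg e m := by
    intro m; rw [← hgit, pt_iterate]
  have hmem' : (pt hreg g 0, pt hreg g (i + (j+1))) ∈ M := by
    rw [hg0, hgi]; exact hmem
  obtain ⟨-, hY⟩ := seg_mem_Y hreg hac hGn hM1 hYinv g (i + (j+1)) hmem'
  constructor
  · have := hY i (by omega)
    rwa [show i = i + 0 from rfl, hgi, pt_zero] at this
  · have := hY (i+1) (by omega)
    rwa [hgi, pt_one] at this

end TwoReg

namespace TwoReg
variable {X : Type*} {G : SimpleGraph X}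
variable (hreg : ∀ x : X, (G.neighborSet x).ncard = 2)

lemma crossing_parity (hac : G.IsAcyclic) {n : ℕ} (hn : 1 ≤ n) {Gn : SimpleGraph X}
    (hGn : ∀ x y : X, Gn.Adj x y ↔
      ∃ p : G.Walk x y, p.IsPath ∧ Odd p.length ∧ p.length ≤ 2 * n - 1)
    {M : Set (X × X)} {Y : Set X}
    (hM1 : ∀ p ∈ M, p.1 ∈ Y ∧ p.2 ∈ Y ∧ Gn.Adj p.1 p.2)
    (hMsym : ∀ x y : X, (x, y) ∈ M ↔ (y, x) ∈ M)
    {x : X} (hM3 : ∃! y : X, (x, y) ∈ M)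
    (e₁ e₂ : Edg G) (h1 : e₁.val.1 = x) (h2 : e₂.val.1 = x) (hne : e₁.val.2 ≠ e₂.val.2) :
    Odd (cEdge hreg M n e₁ + cEdge hreg M n e₂) := by
  classical
  set N := 2 * n with hN
  -- the doubly infinite line through x, as a single ray based far on the e₂ side
  set f : Edg G := symE ((nxt hreg)^[N] (symE e₁)) with hf
  set Φ : ℕ → X := pt hreg f with hPhi
  have hA1 : nxt hreg (symE e₁) = e₂ :=
    (nxt_eq hreg (h2.trans h1.symm) hne.symm).symm
  have hA2 : nxt hreg (symE e₂) = e₁ :=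
    (nxt_eq hreg (h1.trans h2.symm) hne).symm
  have hfe : (nxt hreg)^[N] f = e₁ := by
    rw [hf, iterate_symE_self]; simp
  have hright : ∀ m, Φ (N + m) = pt hreg e₁ m := by
    intro m; rw [hPhi, ← hfe, pt_iterate]
  have hsym1 : ∀ m, pt hreg (symE e₁) (m + 1) = pt hreg e₂ m := by
    intro m; rw [← hA1, pt_nxt]; congr 1; omega
  have hsym2 : ∀ m, pt hreg (symE e₂) (m + 1) = pt hreg e₁ m := by
    intro m; rw [← hA2, pt_nxt]; congr 1; omega
  have hleft : ∀ m, m ≤ N → Φ (N - m) = pt hreg e₂ m := by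
    intro m hm
    rw [hPhi, pt, hf, iterate_symE hreg (symE e₁) (by omega : N - m ≤ N)]
    rw [show N - (N - m) = m by omega]
    show ((nxt hreg)^[m] (symE e₁)).val.2 = _
    rw [← pt_succ, hsym1]
  have hΦN : Φ N = x := by
    have := hright 0
    rw [Nat.add_zero] at this
    rw [this, pt_zero, h1]
  have hΦinj : Function.Injective Φ := pt_injective hreg hac f
  -- capture: matched pairs on the line are at odd distance at most 2n-1
  have hcap : ∀ s t : ℕ, (Φ s, Φ t) ∈ M →
      ∃ L, Odd L ∧ L ≤ 2*n - 1 ∧ (t = s + L ∨ s = t + L) := by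
    intro s t hst
    have hadj : Gn.Adj (Φ s) (Φ t) := (hM1 _ hst).2.2
    obtain ⟨p, hp, hodd, hle⟩ := (hGn _ _).mp hadj
    have hstne : s ≠ t := by
      intro hcon; subst hcon; exact (Gn.irrefl) hadj
    rcases Nat.lt_or_ge s t with hlt | hge
    · refine ⟨p.length, hodd, hle, Or.inl ?_⟩
      have hpath : ((ptWalk hreg ((nxt hreg)^[s] f) (t - s)).copy
          (by rw [pt_iterate]; congr 1) (by rw [pt_iterate]; congr 1; omega) :
          G.Walk (Φ s) (Φ t)).IsPath := by
        rw [SimpleGraph.Walk.isPath_copy]; exact ptWalk_isPath hreg hac _ _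
      have := path_length_unique hac hpath hp
      rw [SimpleGraph.Walk.length_copy, ptWalk_length] at this
      omega
    · have hlt : t < s := by omega
      refine ⟨p.length, hodd, hle, Or.inr ?_⟩
      have hpath : ((ptWalk hreg ((nxt hreg)^[t] f) (s - t)).copy
          (by rw [pt_iterate]; congr 1) (by rw [pt_iterate]; congr 1; omega) :
          G.Walk (Φ t) (Φ s)).IsPath := by
        rw [SimpleGraph.Walk.isPath_copy]; exact ptWalk_isPath hreg hac _ _
      have := path_length_unique hac hpath hp.reverse
      rw [SimpleGraph.Walk.length_copy, ptWalk_length,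
        SimpleGraph.Walk.length_reverse] at this
      omega
  -- the crossing finsets in line coordinates
  set T₁ : Finset (ℕ × ℕ) := ((Finset.range (2*N+1)) ×ˢ (Finset.range (2*N+1))).filter
    (fun st => (Φ st.1, Φ st.2) ∈ M ∧ st.1 ≤ N ∧ N < st.2) with hT₁
  set T₂ : Finset (ℕ × ℕ) := ((Finset.range (2*N+1)) ×ˢ (Finset.range (2*N+1))).filter
    (fun st => (Φ st.1, Φ st.2) ∈ M ∧ st.2 < N ∧ N ≤ st.1) with hT₂
  have hc1 : cEdge hreg M n e₁ = T₁.card := by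
    rw [cEdge]
    refine Finset.card_bij (fun ij _ => (N - ij.1, N + ij.2 + 1)) ?_ ?_ ?_
    · rintro ⟨i, j⟩ hij
      rw [Finset.mem_filter, Finset.mem_product, Finset.mem_range, Finset.mem_range] at hij
      obtain ⟨⟨hi, hj⟩, hm⟩ := hij
      rw [hsym1] at hm
      simp only [hT₁, Finset.mem_filter, Finset.mem_product, Finset.mem_range]
      refine ⟨⟨by omega, by omega⟩, ?_, by omega, by omega⟩
      rw [hleft i (by omega), show N + j + 1 = N + (j+1) from by omega, hright]
      exact hm
    · rintro ⟨i, j⟩ hij ⟨i', j'⟩ hij' heq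
      rw [Finset.mem_filter, Finset.mem_product, Finset.mem_range, Finset.mem_range] at hij hij'
      rw [Prod.mk.injEq] at heq
      have : i = i' := by omega
      have : j = j' := by omega
      simp_all
    · rintro ⟨s, t⟩ hst
      rw [hT₁, Finset.mem_filter, Finset.mem_product, Finset.mem_range, Finset.mem_range] at hst
      obtain ⟨⟨hs, ht⟩, hm, hsN, hNt⟩ := hst
      obtain ⟨L, hLodd, hLle, hcase⟩ := hcap s t hm
      have hL1 : 1 ≤ L := hLodd.pos
      have htL : t = s + L := by omega
      refine ⟨(N - s, t - N - 1), ?_, by simp only [Prod.mk.injEq]; omega⟩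
      rw [Finset.mem_filter, Finset.mem_product, Finset.mem_range, Finset.mem_range]
      refine ⟨⟨by omega, by omega⟩, ?_⟩
      rw [hsym1, ← hleft (N - s) (by omega), ← hright (t - N - 1 + 1),
        show N - (N - s) = s by omega, show N + (t - N - 1 + 1) = t by omega]
      exact hm
  have hc2 : cEdge hreg M n e₂ = T₂.card := by
    rw [cEdge]
    refine Finset.card_bij (fun ij _ => (N + ij.1, N - (ij.2 + 1))) ?_ ?_ ?_
    · rintro ⟨i, j⟩ hij
      rw [Finset.mem_filter, Finset.mem_product, Finset.mem_range, Finset.mem_range] at hij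
      obtain ⟨⟨hi, hj⟩, hm⟩ := hij
      rw [hsym2] at hm
      simp only [hT₂, Finset.mem_filter, Finset.mem_product, Finset.mem_range]
      refine ⟨⟨by omega, by omega⟩, ?_, by omega, by omega⟩
      rw [← hright i, ← hleft (j + 1) (by omega)] at hm
      exact hm
    · rintro ⟨i, j⟩ hij ⟨i', j'⟩ hij' heq
      rw [Finset.mem_filter, Finset.mem_product, Finset.mem_range, Finset.mem_range] at hij hij'
      rw [Prod.mk.injEq] at heq
      obtain ⟨⟨⟨hi, hj⟩, -⟩, ⟨⟨hi', hj'⟩, -⟩⟩ := And.intro hij hij'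
      have : i = i' := by omega
      have : j = j' := by omega
      simp_all
    · rintro ⟨s, t⟩ hst
      rw [hT₂, Finset.mem_filter, Finset.mem_product, Finset.mem_range, Finset.mem_range] at hst
      obtain ⟨⟨hs, ht⟩, hm, htN, hNs⟩ := hst
      obtain ⟨L, hLodd, hLle, hcase⟩ := hcap s t hm
      have hL1 : 1 ≤ L := hLodd.pos
      have hsL : s = t + L := by omega
      refine ⟨(s - N, N - t - 1), ?_, by simp only [Prod.mk.injEq]; omega⟩
      rw [Finset.mem_filter, Finset.mem_product, Finset.mem_range, Finset.mem_range]
      refine ⟨⟨by omega, by omega⟩, ?_⟩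
      rw [hsym2, ← hright (s - N), ← hleft ((N - t - 1) + 1) (by omega),
        show N + (s - N) = s by omega, show N - (N - t - 1 + 1) = t by omega]
      exact hm
  -- U is the full crossing set
  have hdisjT : Disjoint T₁ T₂ := by
    rw [hT₁, hT₂, Finset.disjoint_filter]
    rintro st _ ⟨-, -, h2'⟩ ⟨-, h3', -⟩
    exact absurd h3' (not_lt.mpr h2'.le)
  set U : Finset (ℕ × ℕ) := T₁ ∪ T₂ with hUdef
  have hcardU : U.card = T₁.card + T₂.card := Finset.card_union_of_disjoint hdisjT
  have hU : ∀ st : ℕ × ℕ, st ∈ U ↔ (st.1 < 2*N+1 ∧ st.2 < 2*N+1 ∧ (Φ st.1, Φ st.2) ∈ M ∧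
      ((st.1 ≤ N ∧ N < st.2) ∨ (st.2 < N ∧ N ≤ st.1))) := by
    intro st
    simp only [hUdef, hT₁, hT₂, Finset.mem_union, Finset.mem_filter, Finset.mem_product,
      Finset.mem_range]
    tauto
  -- exactly one element of U has first coordinate N
  have hA : (U.filter (fun st => st.1 = N)).card = 1 := by
    obtain ⟨y₀, hy₀, huniq⟩ := hM3
    have hadjx : Gn.Adj x y₀ := (hM1 _ hy₀).2.2
    obtain ⟨e, L, he1, hLodd, hLle, hpt⟩ := (gn_char hreg hGn hac x y₀).mp hadjx
    have hL1 : 1 ≤ L := hLodd.pos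
    have hee : e = e₁ ∨ e = e₂ := by
      obtain ⟨a, b, hab, hset⟩ := Set.ncard_eq_two.mp (hreg x)
      have m0 : e.val.2 = a ∨ e.val.2 = b := by
        have : e.val.2 ∈ ({a, b} : Set X) := hset ▸ (he1 ▸ e.prop)
        simpa using this
      have m1 : e₁.val.2 = a ∨ e₁.val.2 = b := by
        have : e₁.val.2 ∈ ({a, b} : Set X) := hset ▸ (h1 ▸ e₁.prop)
        simpa using this
      have m2 : e₂.val.2 = a ∨ e₂.val.2 = b := by
        have : e₂.val.2 ∈ ({a, b} : Set X) := hset ▸ (h2 ▸ e₂.prop)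
        simpa using this
      have hor : e.val.2 = e₁.val.2 ∨ e.val.2 = e₂.val.2 := by
        rcases m1 with ha1 | hb1
        · rcases m2 with ha2 | hb2
          · exact absurd (ha1.trans ha2.symm) hne
          · rcases m0 with h | h
            exacts [Or.inl (h.trans ha1.symm), Or.inr (h.trans hb2.symm)]
        · rcases m2 with ha2 | hb2
          · rcases m0 with h | h
            exacts [Or.inr (h.trans ha2.symm), Or.inl (h.trans hb1.symm)]
          · exact absurd (hb1.trans hb2.symm) hne
      rcases hor with h | h
      · exact Or.inl (Subtype.ext (Prod.ext (he1.trans h1.symm) h))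
      · exact Or.inr (Subtype.ext (Prod.ext (he1.trans h2.symm) h))
    have hex : ∃ t₀, t₀ < 2*N+1 ∧ Φ t₀ = y₀ ∧ (N < t₀ ∨ t₀ < N) := by
      rcases hee with heq | heq
      · refine ⟨N + L, by omega, ?_, Or.inl (by omega)⟩
        rw [hright, ← heq]; exact hpt
      · refine ⟨N - L, by omega, ?_, Or.inr (by omega)⟩
        rw [hleft L (by omega), ← heq]; exact hpt
    obtain ⟨t₀, ht₀r, ht₀Φ, ht₀or⟩ := hex
    have hsingle : U.filter (fun st => st.1 = N) = {(N, t₀)} := by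
      apply Finset.eq_singleton_iff_unique_mem.mpr
      constructor
      · refine Finset.mem_filter.mpr ⟨(hU _).mpr ⟨by omega, by omega, ?_, ?_⟩, rfl⟩
        · rw [hΦN, ht₀Φ]; exact hy₀
        · rcases ht₀or with h | h
          exacts [Or.inl ⟨le_rfl, h⟩, Or.inr ⟨h, le_rfl⟩]
      · rintro ⟨s, t⟩ hst
        rw [Finset.mem_filter] at hst
        obtain ⟨hstU, hstN⟩ := hst
        obtain ⟨-, -, hmem, -⟩ := (hU _).mp hstU
        simp only at hstN
        have hmx : (x, Φ t) ∈ M := by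
          rw [← hΦN]
          have : Φ s = Φ N := by rw [hstN]
          rwa [this] at hmem
        have := huniq (Φ t) hmx
        rw [← ht₀Φ] at this
        have ht : t = t₀ := hΦinj this
        rw [Prod.mk.injEq]
        exact ⟨hstN, ht⟩
    rw [hsingle, Finset.card_singleton]
  -- the rest pairs up under swapping
  have hB : Even ((U.filter (fun st => ¬ st.1 = N)).card) := by
    have hsum : ∑ _st ∈ U.filter (fun st => ¬ st.1 = N), (1 : ZMod 2) = 0 := by
      refine Finset.sum_involution (fun st _ => (st.2, st.1)) (fun a ha => by decide)
        ?_ ?_ (fun a ha => rfl)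
      · intro a ha hone
        obtain ⟨haU, haN⟩ := Finset.mem_filter.mp ha
        obtain ⟨-, -, -, hcond⟩ := (hU _).mp haU
        have hne12 : a.1 ≠ a.2 := by omega
        intro hcon
        exact hne12 (congrArg Prod.snd hcon : a.1 = a.2).symm.symm
      · intro a ha
        obtain ⟨haU, haN⟩ := Finset.mem_filter.mp ha
        obtain ⟨hr1, hr2, hmem, hcond⟩ := (hU _).mp haU
        refine Finset.mem_filter.mpr ⟨(hU _).mpr ⟨hr2, hr1, ?_, ?_⟩, ?_⟩
        · exact (hMsym _ _).mp hmem
        · simp only at haN ⊢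
          omega
        · simp only at haN ⊢
          omega
    rw [Finset.sum_const, nsmul_eq_mul, mul_one] at hsum
    have := (ZMod.natCast_eq_zero_iff _ 2).mp hsum
    exact (even_iff_two_dvd).mpr this
  have hsplit := Finset.card_filter_add_card_filter_not
    (s := U) (p := fun st => st.1 = N)
  rw [hc1, hc2, ← hcardU, ← hsplit, hA, Nat.odd_iff]
  rw [Nat.even_iff] at hB
  omega
end TwoReg

namespace TwoReg
variable {X : Type*} {G : SimpleGraph X}
variable (hreg : ∀ x : X, (G.neighborSet x).ncard = 2)

lemma measurable_of_graph {α β : Type*} [MeasurableSpace α] [MeasurableSpace β]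
    [StandardBorelSpace α] [StandardBorelSpace β] {f : α → β}
    (h : MeasurableSet {p : α × β | p.2 = f p.1}) : Measurable f := by
  intro B hB
  have himg : f ⁻¹' B = Prod.fst '' ({p : α × β | p.2 = f p.1} ∩ (Set.univ ×ˢ B)) := by
    ext a
    constructor
    · intro ha
      exact ⟨(a, f a), ⟨rfl, ⟨trivial, ha⟩⟩, rfl⟩
    · rintro ⟨⟨a', b'⟩, ⟨hb', -, hB'⟩, rfl⟩
      have hb'' : b' = f a' := hb'
      exact Set.mem_preimage.mpr (hb'' ▸ hB')
  rw [himg]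
  refine MeasurableSet.image_of_measurable_injOn
    (h.inter (MeasurableSet.univ.prod hB)) measurable_fst ?_
  rintro ⟨a₁, b₁⟩ ⟨hg₁, -⟩ ⟨a₂, b₂⟩ ⟨hg₂, -⟩ (heq : a₁ = a₂)
  subst heq
  simp only [Set.mem_setOf_eq] at hg₁ hg₂
  rw [Prod.mk.injEq]
  exact ⟨rfl, hg₁.trans hg₂.symm⟩

lemma cEdge_symE {M : Set (X × X)} {n : ℕ}
    (hMsym : ∀ x y : X, (x, y) ∈ M ↔ (y, x) ∈ M) (e : Edg G) :
    cEdge hreg M n (symE e) = cEdge hreg M n e := by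
  classical
  rw [cEdge, cEdge]
  refine Finset.card_bij (fun ij _ => (ij.2, ij.1)) ?_ ?_ ?_
  · rintro ⟨i, j⟩ hij
    rw [Finset.mem_filter, Finset.mem_product, Finset.mem_range, Finset.mem_range] at hij
    obtain ⟨⟨hi, hj⟩, hm⟩ := hij
    rw [symE_symE] at hm
    simp only [Finset.mem_filter, Finset.mem_product, Finset.mem_range]
    exact ⟨⟨hj, hi⟩, (hMsym _ _).mp hm⟩
  · rintro ⟨i, j⟩ _ ⟨i', j'⟩ _ heq
    rw [Prod.mk.injEq] at heq
    rw [Prod.mk.injEq]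
    exact ⟨heq.2, heq.1⟩
  · rintro ⟨s, t⟩ hst
    rw [Finset.mem_filter, Finset.mem_product, Finset.mem_range, Finset.mem_range] at hst
    obtain ⟨⟨hs, ht⟩, hm⟩ := hst
    refine ⟨(t, s), ?_, rfl⟩
    rw [Finset.mem_filter, Finset.mem_product, Finset.mem_range, Finset.mem_range]
    refine ⟨⟨ht, hs⟩, ?_⟩
    rw [symE_symE]
    exact (hMsym _ _).mp hm

include hreg in
lemma edge_cases {x : X} (e e₁ e₂ : Edg G) (he : e.val.1 = x)
    (h1 : e₁.val.1 = x) (h2 : e₂.val.1 = x) (hne : e₁.val.2 ≠ e₂.val.2) :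
    e = e₁ ∨ e = e₂ := by
  obtain ⟨a, b, hab, hset⟩ := Set.ncard_eq_two.mp (hreg x)
  have m0 : e.val.2 = a ∨ e.val.2 = b := by
    have : e.val.2 ∈ ({a, b} : Set X) := hset ▸ (he ▸ e.prop)
    simpa using this
  have m1 : e₁.val.2 = a ∨ e₁.val.2 = b := by
    have : e₁.val.2 ∈ ({a, b} : Set X) := hset ▸ (h1 ▸ e₁.prop)
    simpa using this
  have m2 : e₂.val.2 = a ∨ e₂.val.2 = b := by
    have : e₂.val.2 ∈ ({a, b} : Set X) := hset ▸ (h2 ▸ e₂.prop)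
    simpa using this
  have hor : e.val.2 = e₁.val.2 ∨ e.val.2 = e₂.val.2 := by
    rcases m1 with ha1 | hb1
    · rcases m2 with ha2 | hb2
      · exact absurd (ha1.trans ha2.symm) hne
      · rcases m0 with h | h
        exacts [Or.inl (h.trans ha1.symm), Or.inr (h.trans hb2.symm)]
    · rcases m2 with ha2 | hb2
      · rcases m0 with h | h
        exacts [Or.inr (h.trans ha2.symm), Or.inl (h.trans hb1.symm)]
      · exact absurd (hb1.trans hb2.symm) hne
  rcases hor with h | h
  · exact Or.inl (Subtype.ext (Prod.ext (he.trans h1.symm) h))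
  · exact Or.inr (Subtype.ext (Prod.ext (he.trans h2.symm) h))

end TwoReg


/-- **Lemma (Marks–Unger).** Let `G` be a `2`-regular acyclic Borel bipartite graph on a Polish
space `X` with Borel bipartition `{B₀, B₁}`, let `n ≥ 1`, and let `Gₙ` be the graph where
`x Gₙ y` iff there is a `G`-path of odd length at most `2n - 1` from `x` to `y`. If `Y` is a
`Gₙ`-invariant Borel set such that `Gₙ ↾ Y` has a Borel perfect matching, then `G ↾ Y` has a
Borel perfect matching. -/
theorem two_regular_matching_lemma {X : Type*} [TopologicalSpace X] [PolishSpace X]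
    [MeasurableSpace X] [BorelSpace X]
    (G : SimpleGraph X)
    (hGBorel : MeasurableSet {p : X × X | G.Adj p.1 p.2})
    (hreg : ∀ x : X, (G.neighborSet x).ncard = 2)
    (hacyclic : G.IsAcyclic)
    (B₀ B₁ : Set X) (hB₀ : MeasurableSet B₀) (hB₁ : MeasurableSet B₁)
    (hcover : B₀ ∪ B₁ = Set.univ) (hdisj : Disjoint B₀ B₁)
    (hbip : ∀ x y : X, G.Adj x y → (x ∈ B₀ ∧ y ∈ B₁) ∨ (x ∈ B₁ ∧ y ∈ B₀))
    (n : ℕ) (hn : 1 ≤ n)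
    (Gn : SimpleGraph X)
    (hGn : ∀ x y : X, Gn.Adj x y ↔
      ∃ p : G.Walk x y, p.IsPath ∧ Odd p.length ∧ p.length ≤ 2 * n - 1)
    (Y : Set X)
    (hYBorel : MeasurableSet Y)
    (hYinv : ∀ x y : X, Gn.Adj x y → (x ∈ Y ↔ y ∈ Y))
    (hmatchGn : ∃ M : Set (X × X), MeasurableSet M ∧ IsPerfectMatchingOn Gn Y M) :
    ∃ M : Set (X × X), MeasurableSet M ∧ IsPerfectMatchingOn G Y M := by
  classical
  obtain ⟨M, hMmeas, hM1, hMsym, hM3⟩ := hmatchGn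
  haveI hSB : StandardBorelSpace (TwoReg.Edg G) := hGBorel.standardBorel
  -- measurability of the successor map on directed edges
  have hval : Measurable (Subtype.val : TwoReg.Edg G → X × X) := measurable_subtype_coe
  have hdiagX : MeasurableSet {q : X × X | q.1 = q.2} := isClosed_diagonal.measurableSet
  have hnxt : Measurable (TwoReg.nxt hreg) := by
    apply TwoReg.measurable_of_graph
    have hgraph : {p : TwoReg.Edg G × TwoReg.Edg G | p.2 = TwoReg.nxt hreg p.1} =
        {p : TwoReg.Edg G × TwoReg.Edg G | p.2.val.1 = p.1.val.2} ∩
        {p : TwoReg.Edg G × TwoReg.Edg G | p.2.val.2 = p.1.val.1}ᶜ := by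
      ext p
      simp only [Set.mem_setOf_eq, Set.mem_inter_iff, Set.mem_compl_iff]
      constructor
      · intro h
        refine ⟨by rw [h]; rfl, by rw [h]; exact TwoReg.nxt_ne hreg p.1⟩
      · rintro ⟨h1, h2⟩
        exact TwoReg.nxt_eq hreg h1 h2
    rw [hgraph]
    have hm1 : Measurable (fun p : TwoReg.Edg G × TwoReg.Edg G => p.2.val.1) :=
      measurable_fst.comp (hval.comp measurable_snd)
    have hm2 : Measurable (fun p : TwoReg.Edg G × TwoReg.Edg G => p.1.val.2) :=
      measurable_snd.comp (hval.comp measurable_fst)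
    have hm3 : Measurable (fun p : TwoReg.Edg G × TwoReg.Edg G => p.2.val.2) :=
      measurable_snd.comp (hval.comp measurable_snd)
    have hm4 : Measurable (fun p : TwoReg.Edg G × TwoReg.Edg G => p.1.val.1) :=
      measurable_fst.comp (hval.comp measurable_fst)
    exact ((hm1.prodMk hm2) hdiagX).inter (((hm3.prodMk hm4) hdiagX).compl)
  have hpt : ∀ k, Measurable (fun e => TwoReg.pt hreg e k) := by
    intro k
    exact (measurable_fst.comp hval).comp (hnxt.iterate k)
  have hsymE : Measurable (TwoReg.symE : TwoReg.Edg G → TwoReg.Edg G) :=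
    (measurable_swap.comp hval).subtype_mk
  have hcE : Measurable (TwoReg.cEdge hreg M n) := by
    have hrw : TwoReg.cEdge hreg M n = fun e =>
        ∑ ij ∈ (Finset.range (2*n)) ×ˢ (Finset.range (2*n)),
          if (TwoReg.pt hreg (TwoReg.symE e) (ij.1+1), TwoReg.pt hreg e (ij.2+1)) ∈ M
          then 1 else 0 := by
      funext e
      rw [TwoReg.cEdge, Finset.card_filter]
    rw [hrw]
    apply Finset.measurable_sum
    intro ij _
    have hpair : Measurable (fun e : TwoReg.Edg G =>
        (TwoReg.pt hreg (TwoReg.symE e) (ij.1+1), TwoReg.pt hreg e (ij.2+1))) :=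
      ((hpt (ij.1+1)).comp hsymE).prodMk (hpt (ij.2+1))
    exact Measurable.ite (hpair hMmeas) measurable_const measurable_const
  set A : Set (TwoReg.Edg G) :=
    {e | Odd (TwoReg.cEdge hreg M n e) ∧ e.val.1 ∈ Y ∧ e.val.2 ∈ Y} with hA
  have hAmeas : MeasurableSet A := by
    refine MeasurableSet.inter ?_ (MeasurableSet.inter ?_ ?_)
    · exact hcE ((Set.to_countable {k : ℕ | Odd k}).measurableSet)
    · exact (measurable_fst.comp hval) hYBorel
    · exact (measurable_snd.comp hval) hYBorel
  refine ⟨Subtype.val '' A,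
    (MeasurableEmbedding.subtype_coe hGBorel).measurableSet_image.mpr hAmeas, ?_, ?_, ?_⟩
  · rintro ⟨x, y⟩ ⟨e, ⟨ho, h1, h2⟩, heq⟩
    refine ⟨?_, ?_, ?_⟩ <;> rw [← heq]
    exacts [h1, h2, e.prop]
  · have hsymdir : ∀ x y : X, (x, y) ∈ Subtype.val '' A → (y, x) ∈ Subtype.val '' A := by
      rintro x y ⟨e, ⟨ho, h1, h2⟩, heq⟩
      refine ⟨TwoReg.symE e, ⟨?_, h2, h1⟩, ?_⟩
      · rw [TwoReg.cEdge_symE hreg hMsym]; exact ho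
      · show (e.val.2, e.val.1) = (y, x)
        rw [Prod.mk.injEq]
        exact ⟨congrArg Prod.snd heq, congrArg Prod.fst heq⟩
    exact fun x y => ⟨hsymdir x y, hsymdir y x⟩
  · intro x hx
    obtain ⟨a, b, hab, hset⟩ := Set.ncard_eq_two.mp (hreg x)
    have ha : G.Adj x a := by
      rw [← G.mem_neighborSet, hset]; exact Set.mem_insert _ _
    have hb : G.Adj x b := by
      rw [← G.mem_neighborSet, hset]; exact Set.mem_insert_of_mem _ rfl
    set E1 : TwoReg.Edg G := ⟨(x, a), ha⟩ with hE1
    set E2 : TwoReg.Edg G := ⟨(x, b), hb⟩ with hE2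
    have hoddsum := TwoReg.crossing_parity hreg hacyclic hn hGn hM1 hMsym (hM3 x hx)
      E1 E2 rfl rfl hab
    have key : ∀ (F1 F2 : TwoReg.Edg G), F1.val.1 = x → F2.val.1 = x →
        F1.val.2 ≠ F2.val.2 → Odd (TwoReg.cEdge hreg M n F1) →
        ¬ Odd (TwoReg.cEdge hreg M n F2) →
        ∃! y, (x, y) ∈ Subtype.val '' A := by
      intro F1 F2 hF1 hF2 hFne ho1 ho2
      have hYmem := TwoReg.cEdge_pos_mem_Y hreg hacyclic hGn hM1 hYinv F1
        (by intro h0; rw [h0] at ho1; simp at ho1)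
      refine ⟨F1.val.2, ⟨F1, ⟨ho1, hYmem.1, hYmem.2⟩, ?_⟩, ?_⟩
      · show F1.val = (x, F1.val.2)
        rw [← hF1]
      · rintro y' ⟨e, ⟨ho', hY1', hY2'⟩, heq⟩
        have he1 : e.val.1 = x := by simpa using congrArg Prod.fst heq
        have he2 : e.val.2 = y' := by simpa using congrArg Prod.snd heq
        rcases TwoReg.edge_cases hreg e F1 F2 he1 hF1 hF2 hFne with heqe | heqe
        · rw [← he2, heqe]
        · rw [heqe] at ho'
          exact absurd ho' ho2
    rcases Nat.even_or_odd (TwoReg.cEdge hreg M n E1) with hev | ho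
    · have ho2 : Odd (TwoReg.cEdge hreg M n E2) := by
        rw [Nat.odd_iff] at hoddsum ⊢
        rw [Nat.even_iff] at hev
        omega
      exact key E2 E1 rfl rfl (Ne.symm hab) ho2 (Nat.not_odd_iff_even.mpr hev)
    · have hev2 : ¬ Odd (TwoReg.cEdge hreg M n E2) := by
        rw [Nat.not_odd_iff_even, Nat.even_iff]
        rw [Nat.odd_iff] at hoddsum ho
        omega
      exact key E1 E2 rfl rfl hab ho hev2
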